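/- The number of minimum-weight codewords in the lifted code satisfies A_d(C(q|q^ℓ)) = ((q^ℓ - 1)/(q - 1)) · A_d(C), and moreover every minimum weight codeword of C(q|q^ℓ) has the form u·c where c is a minimum weight codeword of C and u ∈ GF(q^ℓ)*. -/

import Mathlib

open Finset

/-- Hamming weight of a vector. -/
noncomputable def wt {ι R : Type*} [Fintype ι] [Zero R] (c : ι → R) : ℕ :=
  Set.ncard {j | c j ≠ 0}

/-- The lifted code `C(q|q^ℓ)`: the `E`-span of (the image in `E^n` of) a code `C ⊆ F^n`. -/
noncomputable def liftCode (F : Type*) {ι : Type*} (E : Type*) [Field F] [Field E] [Algebra F E]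
    (C : Submodule F (ι → F)) : Submodule E (ι → E) :=
  Submodule.span E ((fun c : ι → F => fun j => algebraMap F E (c j)) '' (C : Set (ι → F)))

/-- `A_i(C)`: the number of codewords of Hamming weight `i`. -/
noncomputable def numWt {ι R : Type*} [Fintype ι] [Semiring R] (C : Submodule R (ι → R)) (i : ℕ) : ℕ :=
  Set.ncard {c : ι → R | c ∈ C ∧ wt c = i}

/-- The set of supports of weight-`i` codewords of `C` (without repetition). -/
def codeSupports {ι R : Type*} [Fintype ι] [Semiring R] (C : Submodule R (ι → R)) (i : ℕ) :
    Set (Set ι) :=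
  {s | ∃ c, c ∈ C ∧ wt c = i ∧ s = {j | c j ≠ 0}}

/-- `C` has minimum Hamming distance `d`. -/
def IsMinDist {ι R : Type*} [Fintype ι] [Semiring R] (C : Submodule R (ι → R)) (d : ℕ) : Prop :=
  (∃ c, c ∈ C ∧ c ≠ 0 ∧ wt c = d) ∧ ∀ c, c ∈ C → c ≠ 0 → d ≤ wt c

/-- The dual code under the standard bilinear form. -/
def dualCode {ι R : Type*} [Fintype ι] [CommRing R] (C : Submodule R (ι → R)) :
    Submodule R (ι → R) where
  carrier := {x | ∀ c ∈ C, ∑ j, x j * c j = 0}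
  add_mem' := by
    intro a b ha hb c hc
    simp only [Set.mem_setOf_eq] at *
    simp [Pi.add_apply, add_mul, Finset.sum_add_distrib, ha c hc, hb c hc]
  zero_mem' := by intro c hc; simp
  smul_mem' := by
    intro a x hx c hc
    simp only [Set.mem_setOf_eq] at *
    simp [Pi.smul_apply, smul_eq_mul, mul_assoc, ← Finset.mul_sum, hx c hc]

/-- Evaluation of multivariate polynomials over `GF(2)` as a linear map. -/
noncomputable def evalLM (m : ℕ) :
    MvPolynomial (Fin m) (ZMod 2) →ₗ[ZMod 2] ((Fin m → ZMod 2) → ZMod 2) where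
  toFun := fun p x => MvPolynomial.eval x p
  map_add' := by intro p q; funext x; simp
  map_smul' := by intro a p; funext x; simp

/-- The binary Reed-Muller code `RM₂(r,m)`: evaluations of polynomials of total degree `≤ r`. -/
noncomputable def RM (r m : ℕ) : Submodule (ZMod 2) ((Fin m → ZMod 2) → ZMod 2) :=
  Submodule.map (evalLM m) (MvPolynomial.restrictTotalDegree (Fin m) (ZMod 2) r)

section Aux

variable {F E : Type*} [Field F] [Field E] [Algebra F E] {n : ℕ}

lemma wt_eq_zero_iff {ι R : Type*} [Fintype ι] [Zero R] {c : ι → R} : wt c = 0 ↔ c = 0 := by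
  unfold wt
  rw [Set.ncard_eq_zero (Set.toFinite _), Set.eq_empty_iff_forall_notMem]
  constructor
  · intro h
    funext j
    have := h j
    simpa using this
  · intro h j
    simp [h]

lemma mem_liftCode_iff {ι : Type*} [Fintype ι] (b : Module.Basis ι F E) (C : Submodule F (Fin n → F))
    (x : Fin n → E) :
    x ∈ liftCode F E C ↔ ∀ t, (fun j => b.repr (x j) t) ∈ C := by
  constructor
  · intro hx
    induction hx using Submodule.span_induction with
    | mem y hy =>
      obtain ⟨c, hc, rfl⟩ := hy
      intro t
      have hkey : (fun j => b.repr ((fun j => algebraMap F E (c j)) j) t) = (b.repr 1 t) • c := by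
        funext j
        have h1 : algebraMap F E (c j) = (c j) • (1 : E) := Algebra.algebraMap_eq_smul_one _
        simp [h1, mul_comm]
      rw [hkey]
      exact C.smul_mem _ hc
    | zero =>
      intro t
      have hkey : (fun j => b.repr ((0 : Fin n → E) j) t) = (0 : Fin n → F) := by
        funext j; simp
      rw [hkey]
      exact C.zero_mem
    | add y z hy hz ihy ihz =>
      intro t
      have hkey : (fun j => b.repr ((y + z) j) t)
          = (fun j => b.repr (y j) t) + (fun j => b.repr (z j) t) := by
        funext j; simp
      rw [hkey]
      exact C.add_mem (ihy t) (ihz t)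
    | smul a y hy ihy =>
      intro t
      have hkey : (fun j => b.repr ((a • y) j) t)
          = ∑ s, (b.repr (a * b s) t) • (fun j => b.repr (y j) s) := by
        funext j
        rw [Finset.sum_apply]
        have h1 : (a • y) j = a * y j := rfl
        rw [h1]
        conv_lhs => rw [← b.sum_repr (y j)]
        rw [Finset.mul_sum]
        simp only [mul_smul_comm, map_sum, map_smul, Finsupp.coe_finset_sum, Finset.sum_apply,
          Finsupp.smul_apply, smul_eq_mul, Pi.smul_apply]
        exact Finset.sum_congr rfl fun s _ => mul_comm _ _
      rw [hkey]
      exact Submodule.sum_mem _ fun s _ => C.smul_mem _ (ihy s)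
  · intro h
    have hx : x = ∑ t, b t • (fun j => algebraMap F E (b.repr (x j) t)) := by
      funext j
      rw [Finset.sum_apply]
      conv_lhs => rw [← b.sum_repr (x j)]
      refine Finset.sum_congr rfl fun t _ => ?_
      simp only [Pi.smul_apply, smul_eq_mul, Algebra.smul_def]
      ring
    rw [hx]
    exact Submodule.sum_mem _ fun t _ =>
      Submodule.smul_mem _ _ (Submodule.subset_span ⟨_, h t, rfl⟩)

lemma wt_unit_mul (u : E) (hu : u ≠ 0) (c : Fin n → F) :
    wt (fun j => u * algebraMap F E (c j)) = wt c := by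
  unfold wt
  congr 1
  ext j
  simp [mul_eq_zero, hu, map_eq_zero]

lemma wt_smul' (a : F) (ha : a ≠ 0) (c : Fin n → F) : wt (a • c) = wt c := by
  unfold wt
  congr 1
  ext j
  simp [Pi.smul_apply, smul_eq_mul, mul_eq_zero, ha]

lemma mul_lift_mem (C : Submodule F (Fin n → F)) (u : E) {c : Fin n → F} (hc : c ∈ C) :
    (fun j => u * algebraMap F E (c j)) ∈ liftCode F E C := by
  have h : (fun j => u * algebraMap F E (c j)) = u • (fun j => algebraMap F E (c j)) := rfl
  rw [h]
  exact Submodule.smul_mem _ _ (Submodule.subset_span ⟨c, hc, rfl⟩)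

end Aux

section Struct

variable {F E : Type*} [Field F] [Field E] [Algebra F E] {n : ℕ}

lemma lift_min_structure [Finite E] {d : ℕ} (C : Submodule F (Fin n → F))
    (hd : IsMinDist C d) {x : Fin n → E} (hx : x ∈ liftCode F E C) (hw : wt x = d) :
    ∃ u : Eˣ, ∃ c, c ∈ C ∧ wt c = d ∧ x = fun j => (u : E) * algebraMap F E (c j) := by
  classical
  haveI : Module.Finite F E := Module.Finite.of_finite
  obtain ⟨⟨c₁, hc₁C, hc₁0, hc₁w⟩, hmin⟩ := hd
  have hd1 : 1 ≤ d := by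
    rcases Nat.eq_zero_or_pos d with h | h
    · exact absurd (wt_eq_zero_iff.mp (h ▸ hc₁w)) hc₁0
    · exact h
  let b := Module.finBasis F E
  set comp : Fin (Module.finrank F E) → (Fin n → F) := fun t j => b.repr (x j) t with hcompdef
  have hcomp : ∀ t, comp t ∈ C := (mem_liftCode_iff b C x).mp hx
  have hzero : ∀ j, x j = 0 ↔ ∀ t, comp t j = 0 := by
    intro j
    constructor
    · intro h t
      simp [hcompdef, h]
    · intro h
      have hre : b.repr (x j) = 0 := Finsupp.ext fun t => h t
      exact b.repr.map_eq_zero_iff.mp hre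
  have hxne : x ≠ 0 := by
    intro h0
    rw [h0, wt_eq_zero_iff.mpr rfl] at hw
    omega
  obtain ⟨s, hs⟩ : ∃ s, comp s ≠ 0 := by
    by_contra h
    push_neg at h
    exact hxne (funext fun j => (hzero j).mpr fun t => congrFun (h t) j)
  have hsubset : ∀ t, {j | comp t j ≠ 0} ⊆ {j | x j ≠ 0} := by
    intro t j hj h0
    exact hj (((hzero j).mp h0) t)
  have hws : wt (comp s) = d := by
    have h1 : wt (comp s) ≤ wt x := Set.ncard_le_ncard (hsubset s) (Set.toFinite _)
    have h2 := hmin _ (hcomp s) hs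
    omega
  have hsupp : {j | comp s j ≠ 0} = {j | x j ≠ 0} := by
    refine Set.eq_of_subset_of_ncard_le (hsubset s) ?_ (Set.toFinite _)
    unfold wt at hw hws
    omega
  obtain ⟨j₀, hj₀⟩ : ∃ j₀, comp s j₀ ≠ 0 := by
    by_contra h
    push_neg at h
    exact hs (funext h)
  have hj₀x : x j₀ ≠ 0 := hsupp.subset hj₀
  have key : ∀ t, comp s j₀ • comp t = comp t j₀ • comp s := by
    intro t
    by_contra hne
    set y := comp s j₀ • comp t - comp t j₀ • comp s with hy
    have hyC : y ∈ C := C.sub_mem (C.smul_mem _ (hcomp t)) (C.smul_mem _ (hcomp s))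
    have hyne : y ≠ 0 := sub_ne_zero.mpr hne
    have hdy := hmin y hyC hyne
    have hysupp : {j | y j ≠ 0} ⊆ {j | x j ≠ 0} \ {j₀} := by
      intro j hj
      simp only [Set.mem_setOf_eq] at hj
      refine ⟨?_, ?_⟩
      · simp only [Set.mem_setOf_eq]
        intro hxj
        apply hj
        have h1 := (hzero j).mp hxj
        simp [hy, Pi.sub_apply, Pi.smul_apply, smul_eq_mul, h1 t, h1 s]
      · simp only [Set.mem_singleton_iff]
        intro hjj
        subst hjj
        apply hj
        simp [hy, Pi.sub_apply, Pi.smul_apply, smul_eq_mul, mul_comm]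
    have hle : wt y ≤ d - 1 := by
      have h1 : wt y ≤ ({j | x j ≠ 0} \ {j₀}).ncard :=
        Set.ncard_le_ncard hysupp ((Set.toFinite _).diff)
      have h2 : ({j | x j ≠ 0} \ {j₀}).ncard = ({j | x j ≠ 0}).ncard - 1 :=
        Set.ncard_diff_singleton_of_mem hj₀x
      unfold wt at hw
      omega
    omega
  set u' : E := ∑ t, (comp t j₀ / comp s j₀) • b t with hu'
  have hx_eq : ∀ j, x j = algebraMap F E (comp s j) * u' := by
    intro j
    conv_lhs => rw [← b.sum_repr (x j)]
    rw [hu', Finset.mul_sum]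
    refine Finset.sum_congr rfl fun t _ => ?_
    have hk := congrFun (key t) j
    simp only [Pi.smul_apply, smul_eq_mul] at hk
    have harith : b.repr (x j) t = comp s j * (comp t j₀ / comp s j₀) := by
      have hrj : b.repr (x j) t = comp t j := rfl
      rw [hrj]
      field_simp
      linear_combination hk
    rw [harith, mul_smul, Algebra.smul_def]
  have hu'ne : u' ≠ 0 := by
    intro h0
    apply hj₀x
    rw [hx_eq j₀, h0, mul_zero]
  refine ⟨Units.mk0 u' hu'ne, comp s, hcomp s, hws, ?_⟩
  funext j
  rw [hx_eq j]
  simp [mul_comm]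

end Struct

/-- `A_d(C(q|q^ℓ)) = ((q^ℓ-1)/(q-1))·A_d(C)`, and every minimum weight codeword
of the lifted code is `u • c` for a minimum weight codeword `c ∈ C` and `u ∈ E*`. -/
theorem stmt2 {F E : Type*} [Field F] [Field E] [Algebra F E] [Fintype F] [Fintype E]
    {n d : ℕ} (C : Submodule F (Fin n → F)) (hC : C ≠ ⊥) (hd : IsMinDist C d) :
    numWt (liftCode F E C) d = (Fintype.card E - 1) / (Fintype.card F - 1) * numWt C d ∧
    ∀ x ∈ liftCode F E C, wt x = d →
      ∃ u : Eˣ, ∃ c, c ∈ C ∧ wt c = d ∧ x = fun j => (u : E) * algebraMap F E (c j) := by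
  classical
  have hstruct : ∀ x ∈ liftCode F E C, wt x = d →
      ∃ u : Eˣ, ∃ c, c ∈ C ∧ wt c = d ∧ x = fun j => (u : E) * algebraMap F E (c j) :=
    fun x hx hw => lift_min_structure C hd hx hw
  refine ⟨?_, hstruct⟩
  have hd1 : 1 ≤ d := by
    obtain ⟨c₁, hc₁C, hc₁0, hc₁w⟩ := hd.1
    rcases Nat.eq_zero_or_pos d with h | h
    · exact absurd (wt_eq_zero_iff.mp (h ▸ hc₁w)) hc₁0
    · exact h
  set S : Set (Fin n → E) := {x | x ∈ liftCode F E C ∧ wt x = d} with hS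
  set W : Set (Fin n → F) := {c | c ∈ C ∧ wt c = d} with hW
  set Sfin := (Set.toFinite S).toFinset with hSfin
  set Wfin := (Set.toFinite W).toFinset with hWfin
  have hScard : numWt (liftCode F E C) d = Sfin.card := Set.ncard_eq_toFinset_card S (Set.toFinite S)
  have hWcard : numWt C d = Wfin.card := Set.ncard_eq_toFinset_card W (Set.toFinite W)
  set f : Eˣ × (Fin n → F) → (Fin n → E) := fun p j => (p.1 : E) * algebraMap F E (p.2 j) with hf
  have hmap : ∀ p ∈ (Finset.univ : Finset Eˣ) ×ˢ Wfin, f p ∈ Sfin := by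
    rintro ⟨u, c⟩ hp
    rw [Finset.mem_product] at hp
    have hcW : c ∈ W := (Set.Finite.mem_toFinset _).mp hp.2
    rw [Set.Finite.mem_toFinset]
    exact ⟨mul_lift_mem C (u : E) hcW.1, by rw [show f (u, c) = fun j => (u : E) * algebraMap F E (c j) from rfl, wt_unit_mul _ u.ne_zero]; exact hcW.2⟩
  have hsum := Finset.card_eq_sum_card_fiberwise hmap
  have hfiber : ∀ x ∈ Sfin, (((Finset.univ : Finset Eˣ) ×ˢ Wfin).filter fun p => f p = x).card
      = Fintype.card F - 1 := by
    intro x hxS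
    rw [Set.Finite.mem_toFinset] at hxS
    obtain ⟨u₀, c₀, hc₀C, hc₀w, hx₀⟩ := hstruct x hxS.1 hxS.2
    have hc₀0 : c₀ ≠ 0 := by
      intro h
      rw [h, wt_eq_zero_iff.mpr rfl] at hc₀w
      omega
    obtain ⟨j₀, hj₀⟩ : ∃ j₀, c₀ j₀ ≠ 0 := by
      by_contra h
      push_neg at h
      exact hc₀0 (funext h)
    have hbij : ((Finset.univ : Finset Fˣ)).card
        = (((Finset.univ : Finset Eˣ) ×ˢ Wfin).filter fun p => f p = x).card := by
      refine Finset.card_bij (fun (a : Fˣ) _ =>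
        (u₀ * Units.map (algebraMap F E : F →* E) a, ((a⁻¹ : Fˣ) : F) • c₀)) ?_ ?_ ?_
      · intro a _
        rw [Finset.mem_filter, Finset.mem_product]
        have hainv : ((a⁻¹ : Fˣ) : F) ≠ 0 := Units.ne_zero _
        refine ⟨⟨Finset.mem_univ _, ?_⟩, ?_⟩
        · rw [Set.Finite.mem_toFinset]
          exact ⟨C.smul_mem _ hc₀C, by rw [wt_smul' _ hainv]; exact hc₀w⟩
        · funext j
          rw [hx₀]
          show (u₀ : E) * algebraMap F E (a : F) * algebraMap F E (((a⁻¹ : Fˣ) : F) * c₀ j)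
            = (u₀ : E) * algebraMap F E (c₀ j)
          rw [map_mul]
          have h1 : algebraMap F E ((a : F)) * algebraMap F E (((a⁻¹ : Fˣ) : F)) = 1 := by
            rw [← map_mul]
            norm_cast
            simp
          linear_combination (u₀ : E) * algebraMap F E (c₀ j) * h1
      · intro a₁ _ a₂ _ h
        have h1 := congrArg Prod.fst h
        simp only at h1
        have h2 : Units.map (algebraMap F E : F →* E) a₁ = Units.map (algebraMap F E : F →* E) a₂ :=
          mul_left_cancel h1
        exact Units.map_injective (algebraMap F E).injective h2
      · rintro ⟨u, c⟩ hp
        rw [Finset.mem_filter, Finset.mem_product] at hp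
        obtain ⟨⟨-, hcW⟩, hfp⟩ := hp
        rw [Set.Finite.mem_toFinset] at hcW
        have hpt : ∀ j, (u : E) * algebraMap F E (c j) = (u₀ : E) * algebraMap F E (c₀ j) := by
          intro j
          have := congrFun hfp j
          rw [hx₀] at this
          exact this
        have hcj₀ : c j₀ ≠ 0 := by
          intro h0
          have := hpt j₀
          rw [h0, map_zero, mul_zero] at this
          exact (mul_ne_zero u₀.ne_zero (by rwa [map_ne_zero])) this.symm
        have hcross : ∀ j, c j * c₀ j₀ = c₀ j * c j₀ := by
          intro j
          apply (algebraMap F E).injective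
          rw [map_mul, map_mul]
          apply mul_left_cancel₀ (mul_ne_zero u₀.ne_zero u.ne_zero)
          linear_combination (u₀ : E) * algebraMap F E (c₀ j₀) * hpt j
            - (u₀ : E) * algebraMap F E (c₀ j) * hpt j₀
        refine ⟨Units.mk0 (c₀ j₀ / c j₀) (div_ne_zero hj₀ hcj₀), Finset.mem_univ _, ?_⟩
        refine Prod.ext ?_ ?_
        · apply Units.ext
          show (u₀ : E) * algebraMap F E (c₀ j₀ / c j₀) = (u : E)
          rw [map_div₀]
          have h2 := hpt j₀
          have hne : algebraMap F E (c j₀) ≠ 0 := by rwa [map_ne_zero]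
          field_simp
          linear_combination h2.symm
        · show (((Units.mk0 (c₀ j₀ / c j₀) (div_ne_zero hj₀ hcj₀))⁻¹ : Fˣ) : F) • c₀ = c
          have hval : (((Units.mk0 (c₀ j₀ / c j₀) (div_ne_zero hj₀ hcj₀))⁻¹ : Fˣ) : F)
              = c j₀ / c₀ j₀ := by
            rw [Units.val_inv_eq_inv_val, Units.val_mk0, inv_div]
          funext j
          rw [hval]
          show (c j₀ / c₀ j₀) * c₀ j = c j
          field_simp
          linear_combination - hcross j
    rw [← hbij, Finset.card_univ]
    rw [← Nat.card_eq_fintype_card, Nat.card_units, Nat.card_eq_fintype_card]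
  -- total count
  have htot : (Fintype.card E - 1) * Wfin.card = Sfin.card * (Fintype.card F - 1) := by
    have h1 : ((Finset.univ : Finset Eˣ) ×ˢ Wfin).card = Fintype.card Eˣ * Wfin.card := by
      rw [Finset.card_product, Finset.card_univ]
    have h2 : Fintype.card Eˣ = Fintype.card E - 1 := by
      rw [← Nat.card_eq_fintype_card, Nat.card_units, Nat.card_eq_fintype_card]
    rw [← h2, ← h1, hsum]
    rw [Finset.sum_congr rfl hfiber, Finset.sum_const, smul_eq_mul, mul_comm]
  have hdvd : (Fintype.card F - 1) ∣ (Fintype.card E - 1) := by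
    have h := Subgroup.card_dvd_of_injective (Units.map (algebraMap F E : F →* E))
      (Units.map_injective (algebraMap F E).injective)
    rwa [Nat.card_units, Nat.card_units, Nat.card_eq_fintype_card, Nat.card_eq_fintype_card] at h
  have hqpos : 0 < Fintype.card F - 1 := by
    have := Fintype.one_lt_card (α := F)
    omega
  obtain ⟨m, hm⟩ := hdvd
  rw [hScard, hWcard, hm, Nat.mul_div_cancel_left m hqpos]
  rw [hm] at htot
  apply Nat.eq_of_mul_eq_mul_left hqpos
  calc (Fintype.card F - 1) * Sfin.card = Sfin.card * (Fintype.card F - 1) := mul_comm _ _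
    _ = (Fintype.card F - 1) * m * Wfin.card := htot.symm
    _ = (Fintype.card F - 1) * (m * Wfin.card) := by ring
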